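/- The number of pairs (i,j) of nonnegative integers with j ≤ q-1 and qi + (q+1)j ≤ s equals s - g + 1 for all integers s with 2g - 2 < s, where g = q(q-1)/2. -/

import Mathlib

private lemma herm_key (q a b : ℕ) (h : b ≤ a) :
    q * (a - b) + (q + 1) * b = q * a + b := by
  obtain ⟨k, rfl⟩ := Nat.exists_eq_add_of_le h
  simp only [Nat.add_sub_cancel_left]
  ring

/-- For `q ≥ 2`, `g = q(q-1)/2` and any `s > 2g - 2`, the number of pairs
`(i, j)` of nonnegative integers with `j ≤ q - 1` and `q i + (q+1) j ≤ s`
equals `s - g + 1`. -/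
theorem hermitian_monomial_count (q g s : ℕ) (hq : 2 ≤ q) (hg : g = q * (q - 1) / 2)
    (hs : 2 * g - 2 < s) :
    Set.ncard {p : ℕ × ℕ | p.2 ≤ q - 1 ∧ q * p.1 + (q + 1) * p.2 ≤ s}
      = s - g + 1 := by
  have hq0 : 0 < q := by omega
  have h2g : 2 * g = q * (q - 1) := by
    have he : 2 ∣ q * (q - 1) := by
      have : Even ((q - 1) * (q - 1 + 1)) := Nat.even_mul_succ_self (q - 1)
      have hq1 : q - 1 + 1 = q := by omega
      rw [hq1] at this
      rw [mul_comm]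
      exact this.two_dvd
    rw [hg, Nat.mul_div_cancel' he]
  have hg1 : 1 ≤ g := by
    have : 2 ≤ q * (q - 1) := by
      calc 2 = 2 * 1 := by omega
      _ ≤ q * (q - 1) := Nat.mul_le_mul hq (by omega)
    omega
  -- the set as a Finset
  set A : Finset (ℕ × ℕ) := (Finset.range (s+1) ×ˢ Finset.range (s+1)).filter
      (fun p => p.2 ≤ q - 1 ∧ q * p.1 + (q + 1) * p.2 ≤ s) with hA
  have hset : {p : ℕ × ℕ | p.2 ≤ q - 1 ∧ q * p.1 + (q + 1) * p.2 ≤ s} = ↑A := by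
    ext p
    simp only [hA, Set.mem_setOf_eq, Finset.coe_filter, Finset.mem_product,
      Finset.mem_range, Set.mem_setOf_eq]
    constructor
    · rintro ⟨h1, h2⟩
      refine ⟨⟨?_, ?_⟩, h1, h2⟩
      · have : p.1 ≤ q * p.1 := Nat.le_mul_of_pos_left _ hq0
        omega
      · have : p.2 ≤ (q + 1) * p.2 := Nat.le_mul_of_pos_left _ (by omega)
        omega
    · rintro ⟨_, h⟩; exact h
  rw [hset, Set.ncard_coe_finset]
  -- bijection with B
  set B : Finset ℕ := (Finset.range (s+1)).filter (fun v => v % q ≤ v / q) with hB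
  have hAB : A.card = B.card := by
    apply Finset.card_nbij' (fun p => q * p.1 + (q + 1) * p.2)
      (fun v => (v / q - v % q, v % q))
    · intro p hp
      simp only [Finset.mem_coe, hA, Finset.mem_filter] at hp
      obtain ⟨-, hj, hle⟩ := hp
      have hjq : p.2 < q := by omega
      have hrw : q * p.1 + (q + 1) * p.2 = q * (p.1 + p.2) + p.2 := by ring
      simp only [Finset.mem_coe, hB, Finset.mem_filter, Finset.mem_range]
      refine ⟨by omega, ?_⟩
      rw [hrw, Nat.mul_add_mod, Nat.mod_eq_of_lt hjq, Nat.mul_add_div hq0,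
        Nat.div_eq_of_lt hjq]
      omega
    · intro v hv
      simp only [Finset.mem_coe, hB, Finset.mem_filter, Finset.mem_range] at hv
      obtain ⟨hvs, hle⟩ := hv
      simp only [Finset.mem_coe, hA, Finset.mem_filter, Finset.mem_product, Finset.mem_range]
      have hmod : v % q < q := Nat.mod_lt _ hq0
      have heq : q * (v / q - v % q) + (q + 1) * (v % q) = v := by
        rw [herm_key q _ _ hle, Nat.div_add_mod]
      have hd : q * (v / q - v % q) ≤ v := by omega
      have h1 : v / q - v % q ≤ q * (v / q - v % q) := Nat.le_mul_of_pos_left _ hq0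
      have h2 : v % q ≤ (q + 1) * (v % q) := Nat.le_mul_of_pos_left _ (by omega)
      refine ⟨⟨by omega, by omega⟩, by omega, by omega⟩
    · intro p hp
      simp only [Finset.mem_coe, hA, Finset.mem_filter] at hp
      obtain ⟨-, hj, -⟩ := hp
      have hjq : p.2 < q := by omega
      have hrw : q * p.1 + (q + 1) * p.2 = q * (p.1 + p.2) + p.2 := by ring
      beta_reduce
      rw [hrw, Nat.mul_add_mod, Nat.mod_eq_of_lt hjq, Nat.mul_add_div hq0,
        Nat.div_eq_of_lt hjq]
      simp [Prod.ext_iff]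
    · intro v hv
      simp only [Finset.mem_coe, hB, Finset.mem_filter, Finset.mem_range] at hv
      beta_reduce
      rw [herm_key q _ _ hv.2, Nat.div_add_mod]
  -- the complement (gaps)
  set C : Finset ℕ := (Finset.range (s+1)).filter (fun v => ¬ (v % q ≤ v / q)) with hC
  have hBC : B.card + C.card = s + 1 := by
    rw [hB, hC]
    rw [Finset.card_filter_add_card_filter_not]
    · exact Finset.card_range (s+1)
  have hCg : C.card = g := by
    have : C.card = ((Finset.range q).sigma (fun b => Finset.range b)).card := by
      apply Finset.card_nbij' (fun v => ⟨v % q, v / q⟩)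
        (fun x => q * x.2 + x.1)
      · intro v hv
        simp only [Finset.mem_coe, hC, Finset.mem_filter, Finset.mem_range] at hv
        simp only [Finset.mem_coe, Finset.mem_sigma, Finset.mem_range]
        exact ⟨Nat.mod_lt _ hq0, by omega⟩
      · intro x hx
        simp only [Finset.mem_coe, Finset.mem_sigma, Finset.mem_range] at hx
        obtain ⟨hb, ha⟩ := hx
        simp only [Finset.mem_coe, hC, Finset.mem_filter, Finset.mem_range]
        have hmod : (q * x.2 + x.1) % q = x.1 := by
          rw [Nat.mul_add_mod, Nat.mod_eq_of_lt hb]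
        have hdiv : (q * x.2 + x.1) / q = x.2 := by
          rw [Nat.mul_add_div hq0, Nat.div_eq_of_lt hb]; omega
        refine ⟨?_, by omega⟩
        -- q * x.2 + x.1 ≤ s
        obtain ⟨m, rfl⟩ : ∃ m, q = m + 2 := ⟨q - 2, by omega⟩
        have h1 : (m + 2) * x.2 ≤ (m + 2) * m := Nat.mul_le_mul_left _ (by omega)
        have h2 : (m + 2) * (m + 1) = (m + 2) * m + (m + 2) := by ring
        have h3 : 2 * g = (m + 2) * (m + 2 - 1) := h2g
        have h4 : m + 2 - 1 = m + 1 := by omega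
        rw [h4] at h3
        omega
      · intro v hv
        simp only [Finset.mem_coe, hC, Finset.mem_filter, Finset.mem_range] at hv
        exact Nat.div_add_mod v q
      · intro x hx
        simp only [Finset.mem_coe, Finset.mem_sigma, Finset.mem_range] at hx
        obtain ⟨hb, ha⟩ := hx
        have hmod : (q * x.2 + x.1) % q = x.1 := by
          rw [Nat.mul_add_mod, Nat.mod_eq_of_lt hb]
        have hdiv : (q * x.2 + x.1) / q = x.2 := by
          rw [Nat.mul_add_div hq0, Nat.div_eq_of_lt hb]; omega
        simp [hmod, hdiv]
    rw [this, Finset.card_sigma]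
    simp only [Finset.card_range]
    rw [Finset.sum_range_id, hg]
  omega
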